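/- On the real quaternion algebra ℍ, the element r = a·(i∧j) + b·(i∧k) + c·(j∧k) ∈ ℍ ∧ ℍ (where x∧y = x⊗y − y⊗x) has Schouten bracket [[r,r]] = [r^{12},r^{13}] + [r^{12},r^{23}] + [r^{13},r^{23}] whose commutator with every tensor S_q = 1⊗1⊗q + 1⊗q⊗1 + q⊗1⊗1 (q ∈ ℍ) vanishes, for all real a, b, c. -/

import Mathlib

set_option synthInstance.maxHeartbeats 1000000
set_option maxHeartbeats 1000000
set_option maxHeartbeats 4000000
open TensorProduct Quaternion

noncomputable instance quatTensorThreeMul : Mul (ℍ[ℝ] ⊗[ℝ] (ℍ[ℝ] ⊗[ℝ] ℍ[ℝ])) :=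
  @Algebra.TensorProduct.instMul ℝ ℍ[ℝ] (ℍ[ℝ] ⊗[ℝ] ℍ[ℝ]) _ _ _ _ _ _ _ _ _

/-- On the real quaternions, for any reals `a, b, c` the element
`r = a (i∧j) + b (i∧k) + c (j∧k) ∈ ℍ ∧ ℍ` has Schouten bracket `[[r,r]]` commuting
with every tensor `S q = 1⊗1⊗q + 1⊗q⊗1 + q⊗1⊗1`, `q ∈ ℍ`. -/
theorem quaternion_r_schouten_ad_invariant
    (a b c : ℝ)
    (i j k : ℍ[ℝ]) (hi : i = ⟨0, 1, 0, 0⟩) (hj : j = ⟨0, 0, 1, 0⟩)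
    (hk : k = ⟨0, 0, 0, 1⟩)
    (e12 e13 e23 : ℍ[ℝ] ⊗[ℝ] ℍ[ℝ] →ₗ[ℝ] ℍ[ℝ] ⊗[ℝ] (ℍ[ℝ] ⊗[ℝ] ℍ[ℝ]))
    (he12 : ∀ x y : ℍ[ℝ], e12 (x ⊗ₜ y) = x ⊗ₜ (y ⊗ₜ (1 : ℍ[ℝ])))
    (he13 : ∀ x y : ℍ[ℝ], e13 (x ⊗ₜ y) = x ⊗ₜ ((1 : ℍ[ℝ]) ⊗ₜ y))
    (he23 : ∀ x y : ℍ[ℝ], e23 (x ⊗ₜ y) = (1 : ℍ[ℝ]) ⊗ₜ (x ⊗ₜ y))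
    (r : ℍ[ℝ] ⊗[ℝ] ℍ[ℝ])
    (hr : r = a • (i ⊗ₜ j - j ⊗ₜ i) + b • (i ⊗ₜ k - k ⊗ₜ i) + c • (j ⊗ₜ k - k ⊗ₜ j))
    (S : ℍ[ℝ] → ℍ[ℝ] ⊗[ℝ] (ℍ[ℝ] ⊗[ℝ] ℍ[ℝ]))
    (hS : ∀ q : ℍ[ℝ], S q = (1 : ℍ[ℝ]) ⊗ₜ ((1 : ℍ[ℝ]) ⊗ₜ q)
      + (1 : ℍ[ℝ]) ⊗ₜ (q ⊗ₜ (1 : ℍ[ℝ])) + q ⊗ₜ ((1 : ℍ[ℝ]) ⊗ₜ (1 : ℍ[ℝ]))) :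
    ∀ q : ℍ[ℝ],
      ((e12 r * e13 r - e13 r * e12 r) + (e12 r * e23 r - e23 r * e12 r)
        + (e13 r * e23 r - e23 r * e13 r)) * S q
      = S q * ((e12 r * e13 r - e13 r * e12 r) + (e12 r * e23 r - e23 r * e12 r)
        + (e13 r * e23 r - e23 r * e13 r)) := by
  letI iR : NonUnitalNonAssocRing (ℍ[ℝ] ⊗[ℝ] (ℍ[ℝ] ⊗[ℝ] ℍ[ℝ])) :=
    @Algebra.TensorProduct.instNonUnitalNonAssocRing ℝ ℍ[ℝ] (ℍ[ℝ] ⊗[ℝ] ℍ[ℝ]) _ _ _ _ _ _ _ _ _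
  haveI : IsScalarTower ℝ (ℍ[ℝ] ⊗[ℝ] (ℍ[ℝ] ⊗[ℝ] ℍ[ℝ])) (ℍ[ℝ] ⊗[ℝ] (ℍ[ℝ] ⊗[ℝ] ℍ[ℝ])) :=
    @Algebra.TensorProduct.isScalarTower_right ℝ ℝ ℍ[ℝ] (ℍ[ℝ] ⊗[ℝ] ℍ[ℝ]) _ _ _ _ _ _ _ _ _ _ _ _ _
  haveI : SMulCommClass ℝ (ℍ[ℝ] ⊗[ℝ] (ℍ[ℝ] ⊗[ℝ] ℍ[ℝ])) (ℍ[ℝ] ⊗[ℝ] (ℍ[ℝ] ⊗[ℝ] ℍ[ℝ])) :=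
    @Algebra.TensorProduct.sMulCommClass_right ℝ ℝ ℍ[ℝ] (ℍ[ℝ] ⊗[ℝ] ℍ[ℝ]) _ _ _ _ _ _ _ _ _ _ _ _ _
  have hm : ∀ x y : (ℍ[ℝ] ⊗[ℝ] (ℍ[ℝ] ⊗[ℝ] ℍ[ℝ])), @HMul.hMul _ _ _ (@instHMul _ quatTensorThreeMul) x y =
      @HMul.hMul _ _ _ (@instHMul _ (@NonUnitalNonAssocSemiring.toMul _
        iR.toNonUnitalNonAssocSemiring)) x y := fun _ _ => rfl
  simp only [hm]
  have htmm : ∀ (x₁ x₂ : ℍ[ℝ]) (y₁ y₂ : ℍ[ℝ] ⊗[ℝ] ℍ[ℝ]),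
      @HMul.hMul _ _ _ (@instHMul _ (@NonUnitalNonAssocSemiring.toMul _
        iR.toNonUnitalNonAssocSemiring)) (x₁ ⊗ₜ y₁) (x₂ ⊗ₜ y₂) = (x₁ * x₂) ⊗ₜ (y₁ * y₂) :=
    fun x₁ x₂ y₁ y₂ => @Algebra.TensorProduct.tmul_mul_tmul ℝ ℍ[ℝ] (ℍ[ℝ] ⊗[ℝ] ℍ[ℝ])
      _ _ _ _ _ _ _ _ _ x₁ x₂ y₁ y₂
  have hii : i * i = -1 := by
    ext <;> simp only [Quaternion.re_mul, Quaternion.imI_mul, Quaternion.imJ_mul, Quaternion.imK_mul, Quaternion.re_neg, Quaternion.imI_neg, Quaternion.imJ_neg, Quaternion.imK_neg] <;> subst hi <;> norm_num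
  have hjj : j * j = -1 := by
    ext <;> simp only [Quaternion.re_mul, Quaternion.imI_mul, Quaternion.imJ_mul, Quaternion.imK_mul, Quaternion.re_neg, Quaternion.imI_neg, Quaternion.imJ_neg, Quaternion.imK_neg] <;> subst hj <;> norm_num
  have hkk : k * k = -1 := by
    ext <;> simp only [Quaternion.re_mul, Quaternion.imI_mul, Quaternion.imJ_mul, Quaternion.imK_mul, Quaternion.re_neg, Quaternion.imI_neg, Quaternion.imJ_neg, Quaternion.imK_neg] <;> subst hk <;> norm_num
  have hij : i * j = k := by
    ext <;> simp only [Quaternion.re_mul, Quaternion.imI_mul, Quaternion.imJ_mul, Quaternion.imK_mul, Quaternion.re_neg, Quaternion.imI_neg, Quaternion.imJ_neg, Quaternion.imK_neg] <;> subst hi hj hk <;> norm_num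
  have hji : j * i = -k := by
    ext <;> simp only [Quaternion.re_mul, Quaternion.imI_mul, Quaternion.imJ_mul, Quaternion.imK_mul, Quaternion.re_neg, Quaternion.imI_neg, Quaternion.imJ_neg, Quaternion.imK_neg] <;> subst hi hj hk <;> norm_num
  have hik : i * k = -j := by
    ext <;> simp only [Quaternion.re_mul, Quaternion.imI_mul, Quaternion.imJ_mul, Quaternion.imK_mul, Quaternion.re_neg, Quaternion.imI_neg, Quaternion.imJ_neg, Quaternion.imK_neg] <;> subst hi hj hk <;> norm_num
  have hki : k * i = j := by
    ext <;> simp only [Quaternion.re_mul, Quaternion.imI_mul, Quaternion.imJ_mul, Quaternion.imK_mul, Quaternion.re_neg, Quaternion.imI_neg, Quaternion.imJ_neg, Quaternion.imK_neg] <;> subst hi hj hk <;> norm_num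
  have hjk : j * k = i := by
    ext <;> simp only [Quaternion.re_mul, Quaternion.imI_mul, Quaternion.imJ_mul, Quaternion.imK_mul, Quaternion.re_neg, Quaternion.imI_neg, Quaternion.imJ_neg, Quaternion.imK_neg] <;> subst hi hj hk <;> norm_num
  have hkj : k * j = -i := by
    ext <;> simp only [Quaternion.re_mul, Quaternion.imI_mul, Quaternion.imJ_mul, Quaternion.imK_mul, Quaternion.re_neg, Quaternion.imI_neg, Quaternion.imJ_neg, Quaternion.imK_neg] <;> subst hi hj hk <;> norm_num
  have key : (e12 r * e13 r - e13 r * e12 r) + (e12 r * e23 r - e23 r * e12 r)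
        + (e13 r * e23 r - e23 r * e13 r)
      = (2*(a^2+b^2+c^2)) • (i ⊗ₜ (j ⊗ₜ k) - i ⊗ₜ (k ⊗ₜ j) - j ⊗ₜ (i ⊗ₜ k)
          + j ⊗ₜ (k ⊗ₜ i) + k ⊗ₜ (i ⊗ₜ j) - k ⊗ₜ (j ⊗ₜ i)) := by
    simp only [hm]
    simp only [hr, map_add, map_sub, map_smul, he12, he13, he23,
      mul_add, add_mul, mul_sub, sub_mul, smul_mul_assoc, mul_smul_comm,
      Algebra.TensorProduct.tmul_mul_tmul, htmm, hii, hjj, hkk, hij, hji, hik, hki, hjk, hkj,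
      one_mul, mul_one, neg_mul, mul_neg, neg_neg, tmul_neg, neg_tmul, smul_neg]
    module
  intro q
  have hq : q = q.re • 1 + q.imI • i + q.imJ • j + q.imK • k := by
    ext <;> simp <;> subst hi hj hk <;> simp
  rw [key, hS q, hq]
  simp only [mul_add, add_mul, mul_sub, sub_mul, tmul_add, add_tmul, tmul_smul, ← smul_tmul',
    smul_mul_assoc, mul_smul_comm,
    Algebra.TensorProduct.tmul_mul_tmul, htmm, hii, hjj, hkk, hij, hji, hik, hki, hjk, hkj,
    one_mul, mul_one, neg_mul, mul_neg, neg_neg, tmul_neg, neg_tmul, smul_neg]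
  module
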